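/- arXiv:1211.4283 — 4 statements merged into one kernel-verified Lean document; each statement's English description precedes it below -/
import Mathlib

section
/- For every integer n ≥ 1, the n-dimensional varietal hypercube VQ_n contains no triangles (it has no cycle of length 3). -/
/-- The relation `I = {(00,00),(01,01),(10,11),(11,10)}` on pairs of bits,
where a pair `(a, b)` records two consecutive bits (higher bit first). -/
def vqCross (p q : Bool × Bool) : Prop :=
  (p = (false, false) ∧ q = (false, false)) ∨
  (p = (false, true) ∧ q = (false, true)) ∨
  (p = (true, false) ∧ q = (true, true)) ∨
  (p = (true, true) ∧ q = (true, false))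

/-- Adjacency in the varietal hypercube `VQ n`.  A vertex is a function
`Fin n → Bool`, the bit `x_k` (1-indexed, `x = x_n x_{n-1} ⋯ x_1`) being
the value at index `k - 1`; the leading bit `x_n` is at index `n - 1`. -/
def vqAdj : (n : ℕ) → (Fin n → Bool) → (Fin n → Bool) → Prop
  | 0, _, _ => False
  | 1, x, y => x ≠ y
  | (n + 2), x, y =>
    if x (Fin.last (n + 1)) = y (Fin.last (n + 1)) then
      -- both in the same copy of `VQ (n+1)`
      vqAdj (n + 1) (fun i => x i.castSucc) (fun i => y i.castSucc)
    else
      if 3 ∣ (n + 2) then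
        (∀ i : Fin (n + 2), i.val < n - 1 → x i = y i) ∧
        vqCross (x ⟨n, by omega⟩, x ⟨n - 1, by omega⟩)
          (y ⟨n, by omega⟩, y ⟨n - 1, by omega⟩)
      else
        ∀ i : Fin (n + 1), x i.castSucc = y i.castSucc

/-- The `n`-dimensional varietal hypercube `VQ_n`. -/
def varietalCube (n : ℕ) : SimpleGraph (Fin n → Bool) :=
  SimpleGraph.fromRel (vqAdj n)

lemma vqCross_symm : ∀ p q, vqCross p q → vqCross q p := by
  unfold vqCross; decide

lemma vqCross_det : ∀ p q r, vqCross p r → vqCross q r → p = q := by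
  unfold vqCross; decide

lemma vqExt {n : ℕ} {a b : Fin (n+2) → Bool}
    (hl : a (Fin.last (n+1)) = b (Fin.last (n+1)))
    (h : ∀ i : Fin (n+1), a i.castSucc = b i.castSucc) : a = b :=
  funext (Fin.lastCases hl h)

lemma vq_cc {n : ℕ} (x y z : Fin (n+2) → Bool)
    (hxz : x (Fin.last (n+1)) ≠ z (Fin.last (n+1)))
    (hyz : y (Fin.last (n+1)) ≠ z (Fin.last (n+1)))
    (Hx : vqAdj (n+2) x z ∨ vqAdj (n+2) z x)
    (Hy : vqAdj (n+2) y z ∨ vqAdj (n+2) z y) : x = y := by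
  have hxy : x (Fin.last (n+1)) = y (Fin.last (n+1)) := by
    revert hxz hyz
    rcases x (Fin.last (n+1)) <;> rcases y (Fin.last (n+1)) <;>
      rcases z (Fin.last (n+1)) <;> simp
  have hzx := Ne.symm hxz
  have hzy := Ne.symm hyz
  simp only [vqAdj, if_neg hxz, if_neg hzx, if_neg hyz, if_neg hzy] at Hx Hy
  by_cases hd : 3 ∣ (n + 2)
  · simp only [if_pos hd] at Hx Hy
    have hn1 : 1 ≤ n := by omega
    obtain ⟨hlx, hcx⟩ : (∀ i : Fin (n+2), i.val < n - 1 → x i = z i) ∧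
        vqCross (x ⟨n, by omega⟩, x ⟨n-1, by omega⟩) (z ⟨n, by omega⟩, z ⟨n-1, by omega⟩) := by
      rcases Hx with ⟨h1, h2⟩ | ⟨h1, h2⟩
      · exact ⟨h1, h2⟩
      · exact ⟨fun i hi => (h1 i hi).symm, vqCross_symm _ _ h2⟩
    obtain ⟨hly, hcy⟩ : (∀ i : Fin (n+2), i.val < n - 1 → y i = z i) ∧
        vqCross (y ⟨n, by omega⟩, y ⟨n-1, by omega⟩) (z ⟨n, by omega⟩, z ⟨n-1, by omega⟩) := by
      rcases Hy with ⟨h1, h2⟩ | ⟨h1, h2⟩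
      · exact ⟨h1, h2⟩
      · exact ⟨fun i hi => (h1 i hi).symm, vqCross_symm _ _ h2⟩
    have hp := vqCross_det _ _ _ hcx hcy
    have hp1 : x ⟨n, by omega⟩ = y ⟨n, by omega⟩ := congrArg Prod.fst hp
    have hp2 : x ⟨n-1, by omega⟩ = y ⟨n-1, by omega⟩ := congrArg Prod.snd hp
    funext i
    have hi := i.isLt
    have hcases : i.val < n - 1 ∨ i.val = n - 1 ∨ i.val = n ∨ i.val = n + 1 := by omega
    rcases hcases with h | h | h | h
    · exact (hlx i h).trans (hly i h).symm
    · have : i = ⟨n-1, by omega⟩ := Fin.ext h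
      rw [this]; exact hp2
    · have : i = ⟨n, by omega⟩ := Fin.ext h
      rw [this]; exact hp1
    · have : i = Fin.last (n+1) := Fin.ext h
      rw [this]; exact hxy
  · simp only [if_neg hd] at Hx Hy
    have hx : ∀ i : Fin (n+1), x i.castSucc = z i.castSucc := by
      rcases Hx with h | h
      · exact h
      · exact fun i => (h i).symm
    have hy : ∀ i : Fin (n+1), y i.castSucc = z i.castSucc := by
      rcases Hy with h | h
      · exact h
      · exact fun i => (h i).symm
    exact vqExt hxy (fun i => (hx i).trans (hy i).symm)

lemma vq_noTri : ∀ n : ℕ, ∀ a b c : Fin n → Bool,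
    (varietalCube n).Adj a b → (varietalCube n).Adj b c →
    (varietalCube n).Adj a c → False := by
  intro n
  induction n using Nat.strong_induction_on with
  | _ n IH =>
  match n with
  | 0 =>
    intro a b c hab _ _
    exact hab.ne (Subsingleton.elim a b)
  | 1 =>
    intro a b c hab hbc hac
    have h1 : a 0 ≠ b 0 := fun h => hab.ne (funext fun i => by
      rw [Subsingleton.elim i 0]; exact h)
    have h2 : b 0 ≠ c 0 := fun h => hbc.ne (funext fun i => by
      rw [Subsingleton.elim i 0]; exact h)
    have h3 : a 0 ≠ c 0 := fun h => hac.ne (funext fun i => by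
      rw [Subsingleton.elim i 0]; exact h)
    revert h1 h2 h3
    rcases a 0 <;> rcases b 0 <;> rcases c 0 <;> simp
  | (m + 2) =>
    intro a b c hab hbc hac
    obtain ⟨hab', Hab⟩ := (SimpleGraph.fromRel_adj _ _ _).mp hab
    obtain ⟨hbc', Hbc⟩ := (SimpleGraph.fromRel_adj _ _ _).mp hbc
    obtain ⟨hac', Hac⟩ := (SimpleGraph.fromRel_adj _ _ _).mp hac
    by_cases h1 : a (Fin.last (m+1)) = b (Fin.last (m+1))
    · by_cases h2 : b (Fin.last (m+1)) = c (Fin.last (m+1))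
      · -- all in the same copy
        have h3 : a (Fin.last (m+1)) = c (Fin.last (m+1)) := h1.trans h2
        simp only [vqAdj, if_pos h1, if_pos h1.symm] at Hab
        simp only [vqAdj, if_pos h2, if_pos h2.symm] at Hbc
        simp only [vqAdj, if_pos h3, if_pos h3.symm] at Hac
        have nab : (fun i : Fin (m+1) => a i.castSucc) ≠ (fun i => b i.castSucc) :=
          fun h => hab' (vqExt h1 (fun i => congrFun h i))
        have nbc : (fun i : Fin (m+1) => b i.castSucc) ≠ (fun i => c i.castSucc) :=
          fun h => hbc' (vqExt h2 (fun i => congrFun h i))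
        have nac : (fun i : Fin (m+1) => a i.castSucc) ≠ (fun i => c i.castSucc) :=
          fun h => hac' (vqExt h3 (fun i => congrFun h i))
        exact IH (m+1) (by omega) _ _ _
          ((SimpleGraph.fromRel_adj _ _ _).mpr ⟨nab, Hab⟩)
          ((SimpleGraph.fromRel_adj _ _ _).mpr ⟨nbc, Hbc⟩)
          ((SimpleGraph.fromRel_adj _ _ _).mpr ⟨nac, Hac⟩)
      · -- b and a in same copy, c in the other
        have h3 : a (Fin.last (m+1)) ≠ c (Fin.last (m+1)) := h1 ▸ h2
        exact hab' (vq_cc a b c h3 h2 Hac Hbc)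
    · by_cases h2 : a (Fin.last (m+1)) = c (Fin.last (m+1))
      · -- a and c in same copy, b in the other
        have h3 : c (Fin.last (m+1)) ≠ b (Fin.last (m+1)) := fun h => h1 (h2.trans h)
        exact hac' (vq_cc a c b h1 h3 Hab (Or.symm Hbc))
      · -- b and c in same copy, a in the other
        have h3 : b (Fin.last (m+1)) ≠ a (Fin.last (m+1)) := Ne.symm h1
        have h4 : c (Fin.last (m+1)) ≠ a (Fin.last (m+1)) := Ne.symm h2
        exact hbc' (vq_cc b c a h3 h4 (Or.symm Hab) (Or.symm Hac))

/-- For `n ≥ 1`, the varietal hypercube `VQ_n` contains no cycle of length `3`. -/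
theorem stmt3 (n : ℕ) (hn : 1 ≤ n) :
    ¬ ∃ (v : Fin n → Bool) (C : (varietalCube n).Walk v v),
        C.IsCycle ∧ C.length = 3 := by
  rintro ⟨v, C, hC, hlen⟩
  cases C with
  | nil => simp at hlen
  | cons h1 C1 =>
    cases C1 with
    | nil => simp at hlen
    | cons h2 C2 =>
      cases C2 with
      | nil => simp at hlen
      | cons h3 C3 =>
        cases C3 with
        | nil => exact vq_noTri n v _ _ h1 h2 h3.symm
        | cons h4 C4 => simp [SimpleGraph.Walk.length_cons] at hlen
end

section
/- For every integer n ≥ 2, every edge of the n-dimensional varietal hypercube VQ_n is contained in a cycle of length 4. -/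
/-- Flip the lowest bit. -/
def vqFlip0 {N : ℕ} (x : Fin N → Bool) : Fin N → Bool :=
  fun i => if i.val = 0 then ! (x i) else x i

lemma vqFlip0_ne {N : ℕ} (hN : 0 < N) (x : Fin N → Bool) : vqFlip0 x ≠ x := by
  intro h
  have := congrFun h ⟨0, hN⟩
  simp [vqFlip0] at this

lemma vqFlip0_last {n : ℕ} (x : Fin (n + 2) → Bool) :
    vqFlip0 x (Fin.last (n + 1)) = x (Fin.last (n + 1)) := by
  simp [vqFlip0, Fin.last]

lemma init_vqFlip0 {n : ℕ} (x : Fin (n + 1) → Bool) :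
    (fun i : Fin n => vqFlip0 x i.castSucc) = vqFlip0 (fun i => x i.castSucc) := by
  funext i
  simp [vqFlip0, Fin.castSucc, Fin.castAdd, Fin.castLE]

lemma vqAdj_flip0 : ∀ (n : ℕ) (x : Fin (n + 1) → Bool), vqAdj (n + 1) x (vqFlip0 x) := by
  intro n
  induction n with
  | zero =>
    intro x
    simp only [vqAdj]
    exact (vqFlip0_ne (by norm_num) x).symm
  | succ n ih =>
    intro x
    simp only [vqAdj, vqFlip0_last, if_pos rfl]
    rw [init_vqFlip0]
    exact ih _

lemma vqAdj_cross_flip0 {n : ℕ} (x y : Fin (n + 2) → Bool)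
    (hl : ¬ x (Fin.last (n + 1)) = y (Fin.last (n + 1)))
    (h : vqAdj (n + 2) x y) : vqAdj (n + 2) (vqFlip0 x) (vqFlip0 y) := by
  simp only [vqAdj, vqFlip0_last, if_neg hl] at h ⊢
  by_cases h3 : 3 ∣ (n + 2)
  · rw [if_pos h3] at h ⊢
    obtain ⟨hagree, hcross⟩ := h
    refine ⟨?_, ?_⟩
    · intro i hi
      simp only [vqFlip0, hagree i hi]
    · rcases Nat.lt_or_ge n 2 with hn | hn
      · interval_cases n
        · exact absurd h3 (by norm_num)
        · simp only [vqFlip0]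
          rcases hcross with ⟨h1, h2⟩ | ⟨h1, h2⟩ | ⟨h1, h2⟩ | ⟨h1, h2⟩ <;>
            simp_all [vqCross, Prod.ext_iff]
      · have e1 : vqFlip0 x ⟨n, by omega⟩ = x ⟨n, by omega⟩ := by
          simp [vqFlip0]; omega
        have e2 : vqFlip0 x ⟨n - 1, by omega⟩ = x ⟨n - 1, by omega⟩ := by
          simp [vqFlip0]; omega
        have e3 : vqFlip0 y ⟨n, by omega⟩ = y ⟨n, by omega⟩ := by
          simp [vqFlip0]; omega
        have e4 : vqFlip0 y ⟨n - 1, by omega⟩ = y ⟨n - 1, by omega⟩ := by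
          simp [vqFlip0]; omega
        rw [e1, e2, e3, e4]
        exact hcross
  · rw [if_neg h3] at h ⊢
    intro i
    simp only [vqFlip0, h i]

lemma vqAdj_snoc {n : ℕ} (u w : Fin (n + 1) → Bool) (b : Bool) :
    vqAdj (n + 2) (Fin.snoc u b) (Fin.snoc w b) ↔ vqAdj (n + 1) u w := by
  have h1 : (fun i : Fin (n+1) => (Fin.snoc u b : Fin (n+2) → Bool) i.castSucc) = u := by
    funext i; simp [Fin.snoc_castSucc]
  have h2 : (fun i : Fin (n+1) => (Fin.snoc w b : Fin (n+2) → Bool) i.castSucc) = w := by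
    funext i; simp [Fin.snoc_castSucc]
  simp only [vqAdj, Fin.snoc_last, h1, h2]
  simp

lemma cycle4 {V : Type*} {G : SimpleGraph V} {a b c d : V}
    (hab : G.Adj a b) (hbc : G.Adj b c) (hcd : G.Adj c d) (hda : G.Adj d a)
    (hac : a ≠ c) (hbd : b ≠ d) :
    ∃ C : G.Walk a a, C.IsCycle ∧ C.length = 4 ∧ s(a, b) ∈ C.edges := by
  have hab' := hab.ne
  have hbc' := hbc.ne
  have hcd' := hcd.ne
  have hda' := hda.ne
  refine ⟨.cons hab (.cons hbc (.cons hcd (.cons hda .nil))), ?_, rfl, by simp⟩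
  rw [SimpleGraph.Walk.isCycle_def]
  refine ⟨⟨?_⟩, by simp, ?_⟩
  · simp only [SimpleGraph.Walk.edges_cons, SimpleGraph.Walk.edges_nil,
      List.nodup_cons, List.mem_cons, List.not_mem_nil, or_false, List.nodup_nil, and_true,
      Sym2.eq, Sym2.rel_iff', Prod.mk.injEq, Prod.swap_prod_mk, not_or]
    refine ⟨⟨?_, ?_, ?_⟩, ⟨?_, ?_⟩, ?_⟩ <;> tauto
  · simp only [SimpleGraph.Walk.support_cons, SimpleGraph.Walk.support_nil, List.tail_cons,
      List.nodup_cons, List.mem_cons, List.not_mem_nil, or_false, List.nodup_nil, and_true,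
      not_or]
    refine ⟨⟨?_, ?_, ?_⟩, ⟨?_, ?_⟩, ?_⟩ <;> tauto

lemma varietalCube_adj {n : ℕ} {x y : Fin n → Bool} :
    (varietalCube n).Adj x y ↔ x ≠ y ∧ (vqAdj n x y ∨ vqAdj n y x) := by
  simp [varietalCube, SimpleGraph.fromRel_adj]

lemma snoc_ne {n : ℕ} {u w : Fin (n + 1) → Bool} (b : Bool) (h : u ≠ w) :
    (Fin.snoc u b : Fin (n + 2) → Bool) ≠ Fin.snoc w b := by
  intro hc
  apply h
  funext i
  have := congrFun hc i.castSucc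
  simpa using this

def snocHom (n : ℕ) (b : Bool) : varietalCube (n + 1) →g varietalCube (n + 2) where
  toFun u := Fin.snoc u b
  map_rel' := by
    intro u w h
    rw [varietalCube_adj] at h ⊢
    exact ⟨snoc_ne b h.1, h.2.imp ((vqAdj_snoc u w b).2) ((vqAdj_snoc w u b).2)⟩

lemma snocHom_injective (n : ℕ) (b : Bool) : Function.Injective (snocHom n b) := by
  intro u w h
  by_contra hne
  exact snoc_ne b hne h

/-- The cross-edge case: flip the lowest bit of both endpoints. -/
lemma cross_c4 (n : ℕ) (x y : Fin (n + 2) → Bool)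
    (hl : ¬ x (Fin.last (n + 1)) = y (Fin.last (n + 1)))
    (hxy : (varietalCube (n + 2)).Adj x y) :
    ∃ (v : Fin (n + 2) → Bool) (C : (varietalCube (n + 2)).Walk v v),
      C.IsCycle ∧ C.length = 4 ∧ s(x, y) ∈ C.edges := by
  rw [varietalCube_adj] at hxy
  have hcross : vqAdj (n+2) (vqFlip0 x) (vqFlip0 y) ∨ vqAdj (n+2) (vqFlip0 y) (vqFlip0 x) :=
    hxy.2.imp (vqAdj_cross_flip0 x y hl) (vqAdj_cross_flip0 y x (Ne.symm hl))
  have hbc : (varietalCube (n + 2)).Adj y (vqFlip0 y) := by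
    rw [varietalCube_adj]
    exact ⟨(vqFlip0_ne (by omega) y).symm, Or.inl (vqAdj_flip0 (n + 1) y)⟩
  have hcd : (varietalCube (n + 2)).Adj (vqFlip0 y) (vqFlip0 x) := by
    rw [varietalCube_adj]
    refine ⟨fun hc => hl ?_, hcross.symm⟩
    rw [← vqFlip0_last x, ← vqFlip0_last y, hc]
  have hda : (varietalCube (n + 2)).Adj (vqFlip0 x) x := by
    rw [varietalCube_adj]
    exact ⟨vqFlip0_ne (by omega) x, Or.inr (vqAdj_flip0 (n + 1) x)⟩
  have hadj : (varietalCube (n + 2)).Adj x y := by rw [varietalCube_adj]; exact hxy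
  have hac : x ≠ vqFlip0 y := by
    intro hc
    exact hl (by rw [hc, vqFlip0_last])
  have hbd : y ≠ vqFlip0 x := by
    intro hc
    exact hl (by rw [hc, vqFlip0_last])
  obtain ⟨C, h1, h2, h3⟩ := cycle4 hadj hbc hcd hda hac hbd
  exact ⟨x, C, h1, h2, h3⟩

/-- Flip the leading bit. -/
def vqFlipL {n : ℕ} (x : Fin (n + 2) → Bool) : Fin (n + 2) → Bool :=
  fun i => if i.val = n + 1 then ! (x i) else x i

lemma vqFlipL_last {n : ℕ} (x : Fin (n + 2) → Bool) :
    vqFlipL x (Fin.last (n + 1)) = ! x (Fin.last (n + 1)) := by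
  simp [vqFlipL, Fin.last]

lemma vqFlipL_castSucc {n : ℕ} (x : Fin (n + 2) → Bool) (i : Fin (n + 1)) :
    vqFlipL x i.castSucc = x i.castSucc := by
  have : (i.castSucc : Fin (n + 2)).val = i.val := rfl
  simp only [vqFlipL, this]
  have := i.isLt
  rw [if_neg (by omega)]

lemma vqAdj_flipL {n : ℕ} (h3 : ¬ 3 ∣ (n + 2)) (x : Fin (n + 2) → Bool) :
    vqAdj (n + 2) x (vqFlipL x) := by
  simp only [vqAdj, vqFlipL_last]
  rw [if_neg (by simp), if_neg h3]
  intro i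
  rw [vqFlipL_castSucc]

lemma vqAdj_flipL_inner {n : ℕ} (x y : Fin (n + 2) → Bool)
    (hl : x (Fin.last (n + 1)) = y (Fin.last (n + 1)))
    (h : vqAdj (n + 2) x y) : vqAdj (n + 2) (vqFlipL x) (vqFlipL y) := by
  simp only [vqAdj, vqFlipL_last, hl] at h ⊢
  simp only [if_true] at h ⊢
  have e1 : (fun i : Fin (n+1) => vqFlipL x i.castSucc) = fun i => x i.castSucc := by
    funext i; rw [vqFlipL_castSucc]
  have e2 : (fun i : Fin (n+1) => vqFlipL y i.castSucc) = fun i => y i.castSucc := by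
    funext i; rw [vqFlipL_castSucc]
  rw [e1, e2]
  exact h

lemma edge_in_c4 : ∀ (n : ℕ) (x y : Fin (n + 2) → Bool),
    (varietalCube (n + 2)).Adj x y →
    ∃ (v : Fin (n + 2) → Bool) (C : (varietalCube (n + 2)).Walk v v),
      C.IsCycle ∧ C.length = 4 ∧ s(x, y) ∈ C.edges := by
  intro n
  induction n with
  | zero =>
    intro x y hxy
    by_cases hl : x (Fin.last 1) = y (Fin.last 1)
    · -- inner edge of VQ 2; use flipping the top bit
      have h32 : ¬ (3 : ℕ) ∣ 2 := by norm_num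
      have hxy' := hxy
      rw [varietalCube_adj] at hxy'
      have hbc : (varietalCube 2).Adj y (vqFlipL y) := by
        rw [varietalCube_adj]
        refine ⟨fun hc => ?_, Or.inl (vqAdj_flipL h32 y)⟩
        have := congrFun hc (Fin.last 1)
        rw [vqFlipL_last] at this
        simp at this
      have hcd : (varietalCube 2).Adj (vqFlipL y) (vqFlipL x) := by
        rw [varietalCube_adj]
        constructor
        · intro hc
          apply hxy'.1
          funext i
          have := congrFun hc i
          fin_cases i <;> simp_all [vqFlipL]
        · exact (hxy'.2.imp (vqAdj_flipL_inner x y hl)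
            (vqAdj_flipL_inner y x hl.symm)).symm
      have hda : (varietalCube 2).Adj (vqFlipL x) x := by
        rw [varietalCube_adj]
        refine ⟨fun hc => ?_, Or.inr (vqAdj_flipL h32 x)⟩
        have := congrFun hc (Fin.last 1)
        rw [vqFlipL_last] at this
        simp at this
      have hac : x ≠ vqFlipL y := by
        intro hc
        have := congrFun hc (Fin.last 1)
        rw [vqFlipL_last, ← hl] at this
        simp at this
      have hbd : y ≠ vqFlipL x := by
        intro hc
        have := congrFun hc (Fin.last 1)
        rw [vqFlipL_last, hl] at this
        simp at this
      obtain ⟨C, h1, h2, h3⟩ := cycle4 hxy hbc hcd hda hac hbd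
      exact ⟨x, C, h1, h2, h3⟩
    · exact cross_c4 0 x y hl hxy
  | succ n ih =>
    intro x y hxy
    by_cases hl : x (Fin.last (n + 2)) = y (Fin.last (n + 2))
    · -- inner edge: recurse
      obtain ⟨u, w, b, hx, hy⟩ :
          ∃ (u w : Fin (n + 2) → Bool) (b : Bool), Fin.snoc u b = x ∧ Fin.snoc w b = y :=
        ⟨Fin.init x, Fin.init y, x (Fin.last (n + 2)), Fin.snoc_init_self x, by
          rw [hl]; exact Fin.snoc_init_self y⟩
      have hadjuw : (varietalCube (n + 2)).Adj u w := by
        rw [varietalCube_adj]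
        constructor
        · intro hc
          apply hxy.ne
          rw [← hx, ← hy, hc]
        · rw [varietalCube_adj, ← hx, ← hy] at hxy
          exact hxy.2.imp (vqAdj_snoc u w b).1 (vqAdj_snoc w u b).1
      obtain ⟨v, C, h1, h2, h3⟩ := ih u w hadjuw
      refine ⟨snocHom (n + 1) b v, C.map (snocHom (n + 1) b),
        (SimpleGraph.Walk.map_isCycle_iff_of_injective (snocHom_injective (n + 1) b)).2 h1,
        by simp [h2], ?_⟩
      rw [SimpleGraph.Walk.edges_map]
      have : s(x, y) = Sym2.map (snocHom (n + 1) b) s(u, w) := by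
        rw [Sym2.map_pair_eq]
        have : (snocHom (n + 1) b) u = x := hx
        have h2' : (snocHom (n + 1) b) w = y := hy
        rw [this, h2']
      rw [this]
      exact List.mem_map_of_mem h3
    · exact cross_c4 (n + 1) x y hl hxy

/-- For `n ≥ 2`, every edge of `VQ_n` is contained in a cycle of length `4`. -/
theorem stmt5 (n : ℕ) (hn : 2 ≤ n) (e : Sym2 (Fin n → Bool))
    (he : e ∈ (varietalCube n).edgeSet) :
    ∃ (v : Fin n → Bool) (C : (varietalCube n).Walk v v),
      C.IsCycle ∧ C.length = 4 ∧ e ∈ C.edges := by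
  obtain ⟨m, rfl⟩ : ∃ m, n = m + 2 := ⟨n - 2, by omega⟩
  induction e using Sym2.ind with
  | _ x y =>
    rw [SimpleGraph.mem_edgeSet] at he
    exact edge_in_c4 m x y he
end

section
/- For every integer n ≥ 3, every pair of distinct vertices x and y of the n-dimensional varietal hypercube VQ_n, and every integer ℓ with 2^n − 2 ≤ ℓ ≤ 2^n − 1, there exists an xy-path of length ℓ in VQ_n. In particular, VQ_n has a Hamiltonian path between every pair of distinct vertices. -/
open SimpleGraph

/-! ### Generic path machinery -/

lemma exists_walk_of_chain {V : Type*} {G : SimpleGraph V} :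
    ∀ (l : List V) (x y : V), List.Chain G.Adj x l → (x :: l).getLast? = some y →
      ∃ p : G.Walk x y, p.support = x :: l := by
  intro l
  induction l with
  | nil =>
    intro x y _ hl
    simp at hl
    subst hl
    exact ⟨Walk.nil, rfl⟩
  | cons a t ih =>
    intro x y hc hl
    simp only [List.Chain, List.chain_cons] at hc
    rw [List.getLast?_cons_cons] at hl
    obtain ⟨p, hp⟩ := ih a y hc.2 hl
    exact ⟨Walk.cons hc.1 p, by simp [hp]⟩

section search
variable {V : Type*} [DecidableEq V]

def firstSome {α β : Type*} (f : α → Option β) : List α → Option β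
  | [] => none
  | a :: l => match f a with
    | some b => some b
    | none => firstSome f l

def dfs (adj : V → V → Bool) (all : List V) : ℕ → V → V → List V → Option (List V)
  | 0, c, y, _ => if c = y then some [c] else none
  | (k+1), c, y, ban =>
      firstSome (fun w =>
        if adj c w ∧ ¬ w ∈ ban then (dfs adj all k w y (w :: ban)).map (c :: ·) else none) all

def chainB (adj : V → V → Bool) : List V → Bool
  | [] => true
  | [_] => true
  | a :: b :: t => adj a b && chainB adj (b :: t)

def checkList (adj : V → V → Bool) (x y : V) (ℓ : ℕ) (l : List V) : Bool :=
  decide (l.head? = some x) && decide (l.getLast? = some y) && chainB adj l &&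
    decide l.Nodup && decide (l.length = ℓ + 1)

omit [DecidableEq V] in
lemma chain_of_chainB {G : SimpleGraph V} {adj : V → V → Bool}
    (hf : ∀ a b, adj a b = true → G.Adj a b) :
    ∀ (l : List V) (x : V), chainB adj (x :: l) = true → List.Chain G.Adj x l := by
  intro l
  induction l with
  | nil => intro x _; exact List.Chain.nil
  | cons a t ih =>
    intro x h
    rw [chainB, Bool.and_eq_true] at h
    exact List.Chain.cons (hf _ _ h.1) (ih a h.2)

lemma exists_path_of_check {G : SimpleGraph V} {adj : V → V → Bool}
    (hf : ∀ a b, adj a b = true → G.Adj a b) {x y : V} {ℓ : ℕ} {l : List V}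
    (h : checkList adj x y ℓ l = true) :
    ∃ p : G.Walk x y, p.IsPath ∧ p.length = ℓ := by
  rw [checkList] at h
  simp only [Bool.and_eq_true, decide_eq_true_eq] at h
  obtain ⟨⟨⟨⟨h1, h2⟩, h3⟩, h4⟩, h5⟩ := h
  cases l with
  | nil => simp at h1
  | cons a t =>
    have hx : a = x := by simpa using h1
    subst hx
    obtain ⟨p, hp⟩ := exists_walk_of_chain t a y (chain_of_chainB hf t a h3) h2
    refine ⟨p, ?_, ?_⟩
    · rw [Walk.isPath_def, hp]; exact h4
    · have := Walk.length_support p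
      rw [hp] at this
      simpa [this] using h5
end search

/-! ### Decidability of adjacency -/

instance vqCrossDec (p q : Bool × Bool) : Decidable (vqCross p q) := by
  unfold vqCross; infer_instance

instance vqAdjDec : (n : ℕ) → (x y : Fin n → Bool) → Decidable (vqAdj n x y)
  | 0, _, _ => .isFalse (by simp [vqAdj])
  | 1, x, y => by unfold vqAdj; infer_instance
  | (n + 2), x, y => by
    unfold vqAdj
    have : ∀ a b, Decidable (vqAdj (n+1) a b) := vqAdjDec (n+1)
    infer_instance

instance vqCubeAdjDec (n : ℕ) (x y : Fin n → Bool) : Decidable ((varietalCube n).Adj x y) := by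
  rw [varietalCube, fromRel_adj]; infer_instance

/-! ### The base case `VQ_3` -/

def adj3 (u v : Fin 3 → Bool) : Bool := decide ((varietalCube 3).Adj u v)

def allV3 : List (Fin 3 → Bool) :=
  [![false,false,false], ![true,false,false], ![false,true,false], ![true,true,false],
   ![false,false,true], ![true,false,true], ![false,true,true], ![true,true,true]]

def try3 (x y : Fin 3 → Bool) (ℓ : ℕ) : Bool :=
  ((dfs adj3 allV3 ℓ x y [x]).map (checkList adj3 x y ℓ)).getD false

set_option maxRecDepth 100000 in
theorem base_ok : ∀ (a b c d e f : Bool), (![a,b,c] : Fin 3 → Bool) ≠ ![d,e,f] →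
    try3 ![a,b,c] ![d,e,f] 6 = true ∧ try3 ![a,b,c] ![d,e,f] 7 = true := by decide

theorem base_ok' : ∀ x y : Fin 3 → Bool, x ≠ y →
    try3 x y 6 = true ∧ try3 x y 7 = true := by
  intro x y hxy
  have hx : x = ![x 0, x 1, x 2] := by ext i; fin_cases i <;> rfl
  have hy : y = ![y 0, y 1, y 2] := by ext i; fin_cases i <;> rfl
  rw [hx, hy] at hxy ⊢
  exact base_ok _ _ _ _ _ _ hxy

/-! ### `P2`: existence of paths of the top two lengths between any two vertices -/

def P2 {V : Type*} [Fintype V] (G : SimpleGraph V) : Prop :=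
  ∀ x y : V, x ≠ y → ∀ ℓ : ℕ, (ℓ = Fintype.card V - 1 ∨ ℓ = Fintype.card V - 2) →
    ∃ p : G.Walk x y, p.IsPath ∧ p.length = ℓ

theorem P2_vq3 : P2 (varietalCube 3) := by
  intro x y hxy ℓ hℓ
  have hcard : Fintype.card (Fin 3 → Bool) = 8 := by simp
  rw [hcard] at hℓ
  obtain ⟨h6, h7⟩ := base_ok' x y hxy
  have hadj : ∀ a b, adj3 a b = true → (varietalCube 3).Adj a b :=
    fun a b h => of_decide_eq_true h
  have key : ∀ m : ℕ, try3 x y m = true →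
      ∃ p : (varietalCube 3).Walk x y, p.IsPath ∧ p.length = m := by
    intro m hm
    unfold try3 at hm
    cases hdfs : dfs adj3 allV3 m x y [x] with
    | none => rw [hdfs] at hm; simp at hm
    | some l =>
      rw [hdfs] at hm
      simp only [Option.map_some, Option.getD_some] at hm
      exact exists_path_of_check hadj hm
  rcases hℓ with h | h
  · subst h; exact key 7 h7
  · subst h; exact key 6 h6

/-! ### Doubling construction -/

def doubleGraph {V : Type*} (G : SimpleGraph V) (σ : V → V) : SimpleGraph (Bool × V) where
  Adj a b := (a.1 = b.1 ∧ G.Adj a.2 b.2) ∨ (a.1 ≠ b.1 ∧ (b.2 = σ a.2 ∨ a.2 = σ b.2))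
  symm := by
    constructor
    rintro ⟨ba, ua⟩ ⟨bb, ub⟩ (⟨h1, h2⟩ | ⟨h1, h2⟩)
    · exact Or.inl ⟨h1.symm, h2.symm⟩
    · exact Or.inr ⟨h1.symm, h2.symm⟩
  loopless := by
    constructor
    rintro ⟨b, u⟩ (⟨_, h⟩ | ⟨h, _⟩)
    exacts [G.loopless.irrefl u h, h rfl]

lemma doubleGraph_adj {V : Type*} {G : SimpleGraph V} {σ : V → V} (a b : Bool × V) :
    (doubleGraph G σ).Adj a b ↔
      (a.1 = b.1 ∧ G.Adj a.2 b.2) ∨ (a.1 ≠ b.1 ∧ (b.2 = σ a.2 ∨ a.2 = σ b.2)) := Iff.rfl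

@[reducible] def copyHom {V : Type*} (G : SimpleGraph V) (σ : V → V) (b : Bool) :
    G →g doubleGraph G σ where
  toFun u := (b, u)
  map_rel' h := Or.inl ⟨rfl, h⟩

lemma copyHom_injective {V : Type*} (G : SimpleGraph V) (σ : V → V) (b : Bool) :
    Function.Injective (copyHom G σ b) := by
  intro u v h
  exact congrArg Prod.snd h

theorem P2_double {V : Type*} [Fintype V] [DecidableEq V] {G : SimpleGraph V} {σ : V → V}
    (hσ : ∀ v, σ (σ v) = v) (hcard : 3 ≤ Fintype.card V) (hG : P2 G) :
    P2 (doubleGraph G σ) := by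
  have hσinj : Function.Injective σ := fun a b h => by rw [← hσ a, h, hσ]
  set N := Fintype.card V with hN
  have hcard2 : Fintype.card (Bool × V) = 2 * N := by
    simp [Fintype.card_prod, two_mul, hN]
  rintro ⟨bx, u⟩ ⟨by', v⟩ hxy ℓ hℓ
  rw [hcard2] at hℓ
  by_cases hb : bx = by'
  · -- same copy
    subst hb
    have huv : u ≠ v := fun h => hxy (by rw [h])
    obtain ⟨P, hP, hPlen⟩ := hG u v huv (N - 1) (Or.inl rfl)
    cases P with
    | nil => exact absurd rfl huv
    | @cons _ a _ h P' =>
      have hua : u ≠ a := h.ne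
      obtain ⟨Q, hQ, hQlen⟩ := hG (σ u) (σ a) (fun hh => hua (hσinj hh)) (ℓ - N)
        (by omega)
      have hP' : P'.IsPath ∧ u ∉ P'.support := by
        rw [← Walk.cons_isPath_iff]; exact hP
      have e1 : (doubleGraph G σ).Adj (bx, u) (!bx, σ u) :=
        Or.inr ⟨by cases bx <;> simp, Or.inl rfl⟩
      have e2 : (doubleGraph G σ).Adj (!bx, σ a) (bx, a) :=
        Or.inr ⟨by cases bx <;> simp, Or.inl (hσ a).symm⟩
      refine ⟨Walk.cons e1 ((Q.map (copyHom G σ (!bx))).append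
        (Walk.cons e2 (P'.map (copyHom G σ bx)))), ?_, ?_⟩
      · rw [Walk.isPath_def]
        simp only [Walk.support_cons, Walk.support_append, Walk.support_map,
          List.tail_cons, List.nodup_cons, List.nodup_append]
        refine ⟨?_, ?_, ?_, ?_⟩
        · intro hmem
          rcases List.mem_append.1 hmem with hm | hm
          · obtain ⟨w, _, hw⟩ := List.mem_map.1 hm
            have : bx = !bx := (Prod.ext_iff.1 hw.symm).1
            cases bx <;> simp at this
          · obtain ⟨w, hw1, hw2⟩ := List.mem_map.1 hm
            have : u = w := (Prod.ext_iff.1 hw2.symm).2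
            exact hP'.2 (this ▸ hw1)
        · exact (hQ.support_nodup).map (copyHom_injective G σ _)
        · exact (hP'.1.support_nodup).map (copyHom_injective G σ _)
        · intro p hp q hq hpq; subst hpq
          obtain ⟨w1, _, hw1⟩ := List.mem_map.1 hp
          obtain ⟨w2, _, hw2⟩ := List.mem_map.1 hq
          have h1 : p.1 = !bx := by rw [← hw1]; rfl
          have h2 : p.1 = bx := by rw [← hw2]; rfl
          rw [h2] at h1
          cases bx <;> simp at h1
      · have hPlen' : P'.length = N - 2 := by
          rw [Walk.length_cons] at hPlen; omega
        simp only [Walk.length_cons, Walk.length_append, Walk.length_map]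
        omega
  · -- different copies
    have hw : ∃ w : V, w ≠ u ∧ w ≠ σ v := by
      by_contra hc
      push_neg at hc
      have hsub : (Finset.univ : Finset V) ⊆ {u, σ v} := by
        intro w _
        by_cases hwu : w = u
        · simp [hwu]
        · simp [hc w hwu]
      have hle := Finset.card_le_card hsub
      rw [Finset.card_univ] at hle
      have h2 : ({u, σ v} : Finset V).card ≤ 2 :=
        (Finset.card_insert_le _ _).trans (by simp)
      omega
    obtain ⟨w, hwu, hwv⟩ := hw
    obtain ⟨P, hP, hPlen⟩ := hG u w (Ne.symm hwu) (N - 1) (Or.inl rfl)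
    have hsv : σ w ≠ v := fun hh => hwv (by rw [← hh, hσ])
    obtain ⟨Q, hQ, hQlen⟩ := hG (σ w) v hsv (ℓ - N) (by omega)
    have e : (doubleGraph G σ).Adj (bx, w) (by', σ w) := Or.inr ⟨hb, Or.inl rfl⟩
    refine ⟨(P.map (copyHom G σ bx)).append (Walk.cons e (Q.map (copyHom G σ by'))), ?_, ?_⟩
    · rw [Walk.isPath_def]
      simp only [Walk.support_append, Walk.support_cons, Walk.support_map, List.tail_cons,
        List.nodup_append]
      refine ⟨(hP.support_nodup).map (copyHom_injective G σ _),
        (hQ.support_nodup).map (copyHom_injective G σ _), ?_⟩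
      intro p hp q hq hpq; subst hpq
      obtain ⟨w1, _, hw1⟩ := List.mem_map.1 hp
      obtain ⟨w2, _, hw2⟩ := List.mem_map.1 hq
      have h1 : p.1 = bx := by rw [← hw1]; rfl
      have h2 : p.1 = by' := by rw [← hw2]; rfl
      exact hb (h1.symm.trans h2)
    · simp only [Walk.length_append, Walk.length_cons, Walk.length_map]
      omega

/-! ### The matching between the two halves of `VQ (n+2)` -/

def vqSig (n : ℕ) (u : Fin (n + 1) → Bool) : Fin (n + 1) → Bool :=
  if 3 ∣ (n + 2) then
    fun i => if i.val = n - 1 then xor (u (Fin.last n)) (u i) else u i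
  else u

lemma vqSig_invol (n : ℕ) (u : Fin (n + 1) → Bool) : vqSig n (vqSig n u) = u := by
  unfold vqSig
  split
  · next h3 =>
    have hn : 1 ≤ n := by
      rcases h3 with ⟨k, hk⟩; omega
    have hlast : ¬ ((Fin.last n).val = n - 1) := by
      simp only [Fin.val_last]; omega
    funext i
    by_cases hi : i.val = n - 1
    · simp only [hi, if_pos rfl, if_neg hlast]
      cases u (Fin.last n) <;> cases u i <;> rfl
    · simp only [if_neg hi]
  · rfl

lemma vqCross_iff (a b c d : Bool) :
    vqCross (a, b) (c, d) ↔ (c = a ∧ d = xor a b) := by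
  cases a <;> cases b <;> cases c <;> cases d <;> simp [vqCross]

lemma funext_split (n : ℕ) (x y : Fin (n + 2) → Bool)
    (hl : x (Fin.last (n + 1)) = y (Fin.last (n + 1))) :
    x = y ↔ (fun i : Fin (n + 1) => x i.castSucc) = (fun i => y i.castSucc) := by
  constructor
  · intro h; rw [h]
  · intro h
    funext i
    induction i using Fin.lastCases with
    | last => exact hl
    | cast i => exact congrFun h i

lemma vqAdj_same (n : ℕ) (x y : Fin (n + 2) → Bool)
    (hl : x (Fin.last (n + 1)) = y (Fin.last (n + 1))) :
    vqAdj (n + 2) x y ↔ vqAdj (n + 1) (fun i => x i.castSucc) (fun i => y i.castSucc) := by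
  rw [vqAdj, if_pos hl]

lemma vqAdj_cross (n : ℕ) (x y : Fin (n + 2) → Bool)
    (hl : ¬ x (Fin.last (n + 1)) = y (Fin.last (n + 1))) :
    vqAdj (n + 2) x y ↔
      (fun i : Fin (n + 1) => y i.castSucc) = vqSig n (fun i => x i.castSucc) := by
  rw [vqAdj, if_neg hl]
  unfold vqSig
  by_cases h3 : 3 ∣ (n + 2)
  · rw [if_pos h3, if_pos h3]
    have hn : 1 ≤ n := by rcases h3 with ⟨k, hk⟩; omega
    rw [funext_iff]
    constructor
    · rintro ⟨hlow, hcross⟩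
      rw [vqCross_iff] at hcross
      intro i
      simp only
      by_cases hi : i.val = n - 1
      · rw [if_pos hi]
        have hc1 : i.castSucc = (⟨n - 1, by omega⟩ : Fin (n + 2)) := Fin.ext (by simp [hi])
        have hc2 : (Fin.last n).castSucc = (⟨n, by omega⟩ : Fin (n + 2)) := Fin.ext rfl
        rw [hc1, hc2]
        exact hcross.2
      · rw [if_neg hi]
        rcases Nat.lt_trichotomy i.val (n - 1) with hlt | heq | hgt
        · exact (hlow i.castSucc hlt).symm
        · exact absurd heq hi
        · have hin : i.val = n := by omega
          have hieq : i = Fin.last n := Fin.ext hin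
          subst hieq
          have h1 : (Fin.last n).castSucc = (⟨n, by omega⟩ : Fin (n + 2)) := Fin.ext rfl
          rw [h1]
          exact hcross.1
    · intro heq
      constructor
      · intro i hi
        have h1 := heq ⟨i.val, by omega⟩
        have hne : ((⟨i.val, by omega⟩ : Fin (n + 1)) : ℕ) ≠ n - 1 := by
          show i.val ≠ n - 1
          omega
        rw [if_neg hne] at h1
        have h2 : (⟨i.val, by omega⟩ : Fin (n + 1)).castSucc = i := Fin.ext rfl
        rw [h2] at h1
        exact h1.symm
      · rw [vqCross_iff]
        constructor
        · have h1 := heq (Fin.last n)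
          rw [if_neg (by simp only [Fin.val_last]; omega)] at h1
          have h2 : (Fin.last n).castSucc = (⟨n, by omega⟩ : Fin (n + 2)) := Fin.ext rfl
          rw [h2] at h1
          exact h1
        · have h1 := heq ⟨n - 1, by omega⟩
          rw [if_pos rfl] at h1
          have h2 : ((⟨n - 1, by omega⟩ : Fin (n + 1))).castSucc =
              (⟨n - 1, by omega⟩ : Fin (n + 2)) := Fin.ext rfl
          have h3' : (Fin.last n).castSucc = (⟨n, by omega⟩ : Fin (n + 2)) := Fin.ext rfl
          beta_reduce at h1
          rw [h2, h3'] at h1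
          exact h1
  · rw [if_neg h3, if_neg h3]
    rw [funext_iff]
    exact ⟨fun h i => (h i).symm, fun h i => (h i).symm⟩

lemma vq_adj_iff (n : ℕ) (x y : Fin (n + 2) → Bool) :
    (varietalCube (n + 2)).Adj x y ↔
      (doubleGraph (varietalCube (n + 1)) (vqSig n)).Adj
        (x (Fin.last (n + 1)), fun i => x i.castSucc)
        (y (Fin.last (n + 1)), fun i => y i.castSucc) := by
  rw [varietalCube, fromRel_adj, doubleGraph_adj]
  by_cases hl : x (Fin.last (n + 1)) = y (Fin.last (n + 1))
  · rw [vqAdj_same n x y hl, vqAdj_same n y x hl.symm]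
    have hne := not_congr (funext_split n x y hl)
    simp only [varietalCube, fromRel_adj]
    constructor
    · rintro ⟨hxy, hadj⟩
      exact Or.inl ⟨hl, hne.1 hxy, hadj⟩
    · rintro (⟨_, hxy, hadj⟩ | ⟨hcontra, _⟩)
      · exact ⟨hne.2 hxy, hadj⟩
      · exact absurd hl hcontra
  · have hxyne : x ≠ y := fun h => hl (by rw [h])
    rw [vqAdj_cross n x y hl, vqAdj_cross n y x (fun h => hl h.symm)]
    constructor
    · rintro ⟨_, hc⟩
      exact Or.inr ⟨hl, hc⟩
    · rintro (⟨hcontra, _⟩ | ⟨_, hc⟩)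
      · exact absurd hcontra hl
      · exact ⟨hxyne, hc⟩

def vqIso (n : ℕ) :
    varietalCube (n + 2) ≃g doubleGraph (varietalCube (n + 1)) (vqSig n) where
  toEquiv :=
    { toFun := fun x => (x (Fin.last (n + 1)), fun i => x i.castSucc)
      invFun := fun p => Fin.snoc p.2 p.1
      left_inv := by
        intro x
        funext i
        induction i using Fin.lastCases with
        | last => simp
        | cast i => simp
      right_inv := by
        rintro ⟨b, u⟩
        refine Prod.ext (by simp) (by funext i; simp) }
  map_rel_iff' := by
    intro x y
    exact (vq_adj_iff n x y).symm

lemma P2_of_iso {V W : Type*} [Fintype V] [Fintype W] {G : SimpleGraph V}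
    {H : SimpleGraph W} (e : G ≃g H) (h : P2 G) : P2 H := by
  have hcard : Fintype.card W = Fintype.card V := Fintype.card_congr e.toEquiv.symm
  intro x y hxy ℓ hℓ
  rw [hcard] at hℓ
  obtain ⟨p, hp, hlen⟩ := h (e.symm x) (e.symm y)
    (fun hh => hxy (by simpa using congrArg e hh)) ℓ hℓ
  refine ⟨(p.map e.toHom).copy (by simp) (by simp), ?_, ?_⟩
  · rw [Walk.isPath_copy]
    exact SimpleGraph.Walk.map_isPath_of_injective e.toEquiv.injective hp
  · rw [Walk.length_copy, Walk.length_map]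
    exact hlen

theorem P2_vq (n : ℕ) (hn : 3 ≤ n) : P2 (varietalCube n) := by
  induction n, hn using Nat.le_induction with
  | base => exact P2_vq3
  | succ n hn ih =>
    obtain ⟨m, rfl⟩ : ∃ m, n = m + 1 := ⟨n - 1, by omega⟩
    have hcard : 3 ≤ Fintype.card (Fin (m + 1) → Bool) := by
      rw [Fintype.card_fun, Fintype.card_bool, Fintype.card_fin]
      exact le_trans (by norm_num : (3:ℕ) ≤ 2 ^ 2)
        (Nat.pow_le_pow_right (by norm_num) (by omega))
    exact P2_of_iso (vqIso m).symm (P2_double (vqSig_invol m) hcard ih)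

/-- For `n ≥ 3` and distinct vertices `x, y` of `VQ_n`, there is an `xy`-path of
every length `ℓ` with `2^n - 2 ≤ ℓ ≤ 2^n - 1`; in particular there is a
Hamiltonian `xy`-path. -/
theorem stmt9 (n : ℕ) (hn : 3 ≤ n) (x y : Fin n → Bool) (hxy : x ≠ y) :
    (∀ ℓ : ℕ, 2 ^ n - 2 ≤ ℓ → ℓ ≤ 2 ^ n - 1 →
      ∃ p : (varietalCube n).Walk x y, p.IsPath ∧ p.length = ℓ) ∧
    (∃ p : (varietalCube n).Walk x y, p.IsPath ∧ ∀ v : Fin n → Bool, v ∈ p.support) := by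
  have hP := P2_vq n hn
  have hcard : Fintype.card (Fin n → Bool) = 2 ^ n := by
    rw [Fintype.card_fun, Fintype.card_bool, Fintype.card_fin]
  have h8 : 8 ≤ 2 ^ n := by
    calc (8 : ℕ) = 2 ^ 3 := rfl
    _ ≤ 2 ^ n := Nat.pow_le_pow_right (by norm_num) hn
  constructor
  · intro ℓ h1 h2
    exact hP x y hxy ℓ (by rw [hcard]; omega)
  · obtain ⟨p, hp, hlen⟩ := hP x y hxy (2 ^ n - 1) (by rw [hcard]; left; rfl)
    refine ⟨p, hp, ?_⟩
    intro v
    have hnodup := hp.support_nodup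
    have hcard' : p.support.toFinset = Finset.univ := by
      apply Finset.eq_univ_of_card
      rw [List.toFinset_card_of_nodup hnodup, Walk.length_support, hlen, hcard]
      omega
    rw [← List.mem_toFinset, hcard']
    exact Finset.mem_univ v
end

section
/- Let VQ_n = L ⊙ R (n ≥ 2) with L = VQ^0_{n-1} and R = VQ^1_{n-1}, and let x and y be two vertices both lying in H, where H ∈ {L, R}. Then the distance between x and y in the induced subgraph H equals their distance in VQ_n. -/
lemma vqAdj_of_single_diff : ∀ (m : ℕ) (u v : Fin m → Bool) (j : ℕ) (hj : j < m),
    ¬ (3 ∣ (j+1)) → u ⟨j, hj⟩ ≠ v ⟨j, hj⟩ →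
    (∀ i : Fin m, i.val ≠ j → u i = v i) → vqAdj m u v := by
  intro m
  induction m with
  | zero => intro u v j hj; omega
  | succ k ih =>
    intro u v j hj h3 hne hagree
    match k, u, v with
    | 0, u, v =>
      show u ≠ v
      intro h; exact hne (by rw [h])
    | (k+1), u, v =>
      show vqAdj (k+2) u v
      rw [vqAdj]
      by_cases hlast : u (Fin.last (k+1)) = v (Fin.last (k+1))
      · rw [if_pos hlast]
        have hjlt : j < k + 1 := by
          rcases Nat.lt_or_ge j (k+1) with h | h
          · exact h
          · exfalso
            have : j = k + 1 := by omega
            subst this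
            exact hne (by simpa [Fin.last] using hlast)
        exact ih _ _ j hjlt h3 hne (fun i hi => hagree i.castSucc (by simpa using hi))
      · rw [if_neg hlast]
        have hj' : j = k + 1 := by
          by_contra h
          exact hlast (hagree (Fin.last (k+1)) (by simp [Fin.last]; omega))
        subst hj'
        rw [if_neg h3]
        intro i
        exact hagree i.castSucc (by simp [Fin.castSucc, Fin.castAdd]; omega)

/-- Projection of a vertex of `VQ (m+2)` into the half with leading bit `b`. -/
def vqProj (m : ℕ) (b : Bool) (v : Fin (m+2) → Bool) : Fin (m+2) → Bool :=
  Function.update v (Fin.last (m+1)) b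

lemma vqProj_last (m : ℕ) (b : Bool) (v : Fin (m+2) → Bool) :
    vqProj m b v (Fin.last (m+1)) = b :=
  Function.update_self _ _ _

lemma vqProj_castSucc (m : ℕ) (b : Bool) (v : Fin (m+2) → Bool) (i : Fin (m+1)) :
    vqProj m b v i.castSucc = v i.castSucc :=
  Function.update_of_ne (by simp [Fin.ext_iff]; omega) _ _

lemma vqProj_ne_last (m : ℕ) (b : Bool) (v : Fin (m+2) → Bool) (i : Fin (m+2))
    (hi : i ≠ Fin.last (m+1)) : vqProj m b v i = v i :=
  Function.update_of_ne hi _ _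

lemma vqProj_eq_self (m : ℕ) (b : Bool) (v : Fin (m+2) → Bool)
    (hv : v (Fin.last (m+1)) = b) : vqProj m b v = v := by
  rw [vqProj, ← hv, Function.update_eq_self]


lemma proj_eq_of_agree (m : ℕ) (b : Bool) (u v : Fin (m+2) → Bool)
    (hm : u ⟨m, by omega⟩ = v ⟨m, by omega⟩)
    (hm1 : u ⟨m - 1, by omega⟩ = v ⟨m - 1, by omega⟩)
    (hag : ∀ i : Fin (m + 2), i.val < m - 1 → u i = v i) :
    vqProj m b u = vqProj m b v := by
  funext i
  rcases eq_or_ne i (Fin.last (m+1)) with hi | hi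
  · rw [hi, vqProj_last, vqProj_last]
  · rw [vqProj_ne_last _ _ _ _ hi, vqProj_ne_last _ _ _ _ hi]
    have hival : i.val ≤ m := by
      have := i.isLt
      simp [Fin.ext_iff, Fin.last] at hi
      omega
    rcases lt_or_ge i.val (m-1) with hlt | hge
    · exact hag i hlt
    · have : i.val = m - 1 ∨ i.val = m := by omega
      rcases this with hv | hv
      · have hieq : i = (⟨m - 1, by omega⟩ : Fin (m+2)) := Fin.ext hv
        rw [hieq]; exact hm1
      · have hieq : i = (⟨m, by omega⟩ : Fin (m+2)) := Fin.ext hv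
        rw [hieq]; exact hm

lemma proj_adj_of_cross (m : ℕ) (b : Bool) (u v : Fin (m+2) → Bool)
    (h3 : 3 ∣ (m + 2))
    (hm : u ⟨m, by omega⟩ = v ⟨m, by omega⟩)
    (hm1 : u ⟨m - 1, by omega⟩ ≠ v ⟨m - 1, by omega⟩)
    (hag : ∀ i : Fin (m + 2), i.val < m - 1 → u i = v i) :
    (varietalCube (m+2)).Adj (vqProj m b u) (vqProj m b v) := by
  have hmge : 1 ≤ m := by omega
  have hnl : (⟨m - 1, by omega⟩ : Fin (m+2)) ≠ Fin.last (m+1) :=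
    Fin.ne_of_val_ne (by simp [Fin.last])
  have hdiff : vqProj m b u ⟨m - 1, by omega⟩ ≠ vqProj m b v ⟨m - 1, by omega⟩ := by
    rw [vqProj_ne_last _ _ _ _ hnl, vqProj_ne_last _ _ _ _ hnl]
    exact hm1
  rw [varietalCube, SimpleGraph.fromRel_adj]
  refine ⟨fun heq => hdiff (congrFun heq _), Or.inl ?_⟩
  apply vqAdj_of_single_diff (m+2) _ _ (m-1) (by omega) (by omega) hdiff
  intro i hi
  rcases eq_or_ne i (Fin.last (m+1)) with hil | hil
  · rw [hil, vqProj_last, vqProj_last]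
  · rw [vqProj_ne_last _ _ _ _ hil, vqProj_ne_last _ _ _ _ hil]
    have hival : i.val ≤ m := by
      have := i.isLt
      simp [Fin.ext_iff, Fin.last] at hil
      omega
    rcases lt_or_ge i.val (m-1) with hlt | hge
    · exact hag i hlt
    · have : i.val = m := by omega
      have hieq : i = (⟨m, by omega⟩ : Fin (m+2)) := Fin.ext this
      rw [hieq]; exact hm

lemma proj_vqAdj (m : ℕ) (b : Bool) (u v : Fin (m+2) → Bool) (hne : u ≠ v)
    (h : vqAdj (m+2) u v) :
    vqProj m b u = vqProj m b v ∨
      (varietalCube (m+2)).Adj (vqProj m b u) (vqProj m b v) := by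
  rw [vqAdj] at h
  by_cases hlast : u (Fin.last (m+1)) = v (Fin.last (m+1))
  · rw [if_pos hlast] at h
    right
    rw [varietalCube, SimpleGraph.fromRel_adj]
    refine ⟨?_, Or.inl ?_⟩
    · intro heq
      apply hne
      funext i
      rcases eq_or_ne i (Fin.last (m+1)) with hi | hi
      · rw [hi]; exact hlast
      · have := congrFun heq i
        rwa [vqProj_ne_last _ _ _ _ hi, vqProj_ne_last _ _ _ _ hi] at this
    · rw [vqAdj, if_pos (by rw [vqProj_last, vqProj_last])]
      simp only [vqProj_castSucc]
      exact h
  · rw [if_neg hlast] at h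
    by_cases h3 : 3 ∣ (m + 2)
    · rw [if_pos h3] at h
      obtain ⟨hag, hcross⟩ := h
      rcases hcross with ⟨hp, hq⟩ | ⟨hp, hq⟩ | ⟨hp, hq⟩ | ⟨hp, hq⟩ <;>
        rw [Prod.mk.injEq] at hp hq
      · exact Or.inl (proj_eq_of_agree m b u v (by rw [hp.1, hq.1])
          (by rw [hp.2, hq.2]) hag)
      · exact Or.inl (proj_eq_of_agree m b u v (by rw [hp.1, hq.1])
          (by rw [hp.2, hq.2]) hag)
      · exact Or.inr (proj_adj_of_cross m b u v h3 (by rw [hp.1, hq.1])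
          (by rw [hp.2, hq.2]; simp) hag)
      · exact Or.inr (proj_adj_of_cross m b u v h3 (by rw [hp.1, hq.1])
          (by rw [hp.2, hq.2]; simp) hag)
    · rw [if_neg h3] at h
      left
      funext i
      rcases eq_or_ne i (Fin.last (m+1)) with hi | hi
      · rw [hi, vqProj_last, vqProj_last]
      · rw [vqProj_ne_last _ _ _ _ hi, vqProj_ne_last _ _ _ _ hi]
        have hival : i.val < m + 1 := by
          have := i.isLt
          simp [Fin.ext_iff, Fin.last] at hi
          omega
        have := h ⟨i.val, hival⟩
        have hieq : (⟨i.val, hival⟩ : Fin (m+1)).castSucc = i := by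
          simp [Fin.ext_iff]
        rwa [hieq] at this

lemma proj_adj' (m : ℕ) (b : Bool) {u v : Fin (m+2) → Bool}
    (h : (varietalCube (m+2)).Adj u v) :
    vqProj m b u = vqProj m b v ∨
      (varietalCube (m+2)).Adj (vqProj m b u) (vqProj m b v) := by
  rw [varietalCube, SimpleGraph.fromRel_adj] at h
  obtain ⟨hne, h | h⟩ := h
  · exact proj_vqAdj m b u v hne h
  · rcases proj_vqAdj m b v u (Ne.symm hne) h with h' | h'
    · exact Or.inl h'.symm
    · exact Or.inr h'.symm

lemma walk_proj (m : ℕ) (b : Bool) (u v : Fin (m+2) → Bool)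
    (w : (varietalCube (m+2)).Walk u v) :
    ∃ w' : ((varietalCube (m+2)).induce
        {z : Fin (m+2) → Bool | z (Fin.last (m+1)) = b}).Walk
        ⟨vqProj m b u, vqProj_last m b u⟩ ⟨vqProj m b v, vqProj_last m b v⟩,
      w'.length ≤ w.length := by
  induction w with
  | nil => exact ⟨SimpleGraph.Walk.nil, le_rfl⟩
  | cons h p ih =>
    obtain ⟨w', hw'⟩ := ih
    rcases proj_adj' m b h with heq | hadj
    · exact ⟨w'.copy (Subtype.ext heq).symm rfl,
        by rw [SimpleGraph.Walk.length_copy]; simpa using Nat.le_succ_of_le hw'⟩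
    · refine ⟨SimpleGraph.Walk.cons ?_ w', ?_⟩
      · exact hadj
      · exact Nat.succ_le_succ hw'


/-- Let `VQ_n = L ⊙ R` (`n ≥ 2`) and let `x, y` both lie in `H`, where
`H ∈ {L, R}` (encoded by the common leading bit `b`).  Then the distance between
`x` and `y` in the induced subgraph `H` equals their distance in `VQ_n`. -/
theorem stmt11 (n : ℕ) (hn : 2 ≤ n) (b : Bool) (x y : Fin n → Bool)
    (hx : x ⟨n - 1, by omega⟩ = b) (hy : y ⟨n - 1, by omega⟩ = b) :
    ((varietalCube n).induce {v : Fin n → Bool | v ⟨n - 1, by omega⟩ = b}).dist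
        ⟨x, hx⟩ ⟨y, hy⟩ = (varietalCube n).dist x y := by
  obtain ⟨m, rfl⟩ : ∃ m, n = m + 2 := ⟨n - 2, by omega⟩
  have hx' : x (Fin.last (m+1)) = b := hx
  have hy' : y (Fin.last (m+1)) = b := hy
  have hpx : vqProj m b x = x := vqProj_eq_self m b x hx'
  have hpy : vqProj m b y = y := vqProj_eq_self m b y hy'
  let S : Set (Fin (m+2) → Bool) := {z | z (Fin.last (m+1)) = b}
  have hmain : ((varietalCube (m+2)).induce S).dist ⟨x, hx'⟩ ⟨y, hy'⟩
      = (varietalCube (m+2)).dist x y := by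
    by_cases hr : (varietalCube (m+2)).Reachable x y
    · have hr2 : ((varietalCube (m+2)).induce S).Reachable ⟨x, hx'⟩ ⟨y, hy'⟩ := by
        obtain ⟨p⟩ := hr
        obtain ⟨w', _⟩ := walk_proj m b x y p
        exact ⟨w'.copy (Subtype.ext hpx) (Subtype.ext hpy)⟩
      apply le_antisymm
      · obtain ⟨p, hp⟩ := hr.exists_walk_length_eq_dist
        obtain ⟨w', hw'⟩ := walk_proj m b x y p
        calc ((varietalCube (m+2)).induce S).dist ⟨x, hx'⟩ ⟨y, hy'⟩
            ≤ (w'.copy (Subtype.ext hpx) (Subtype.ext hpy)).length :=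
              SimpleGraph.dist_le _
          _ = w'.length := SimpleGraph.Walk.length_copy _ _ _
          _ ≤ p.length := hw'
          _ = (varietalCube (m+2)).dist x y := hp
      · obtain ⟨q, hq⟩ := hr2.exists_walk_length_eq_dist
        calc (varietalCube (m+2)).dist x y
            ≤ (q.map (SimpleGraph.Embedding.induce S).toHom).length :=
              SimpleGraph.dist_le _
          _ = q.length := SimpleGraph.Walk.length_map _ _
          _ = _ := hq
    · have hr2 : ¬ ((varietalCube (m+2)).induce S).Reachable ⟨x, hx'⟩ ⟨y, hy'⟩ := by
        intro hq
        obtain ⟨q⟩ := hq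
        exact hr ⟨q.map (SimpleGraph.Embedding.induce S).toHom⟩
      rw [SimpleGraph.dist_eq_zero_of_not_reachable hr,
        SimpleGraph.dist_eq_zero_of_not_reachable hr2]
  exact hmain
end
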